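/- For a finitely generated projective module V over a commutative ring R, the dual of the submodule Sym_n(V) of symmetric tensors in V^{⊗n} is naturally isomorphic to Sym^n(V*), via the map sending φ₁·φ₂⋯φ_n to the functional v₁⊗⋯⊗v_n ↦ φ₁(v₁)⋯φ_n(v_n). -/

import Mathlib

open Module
open scoped TensorProduct

/-- The `k`-th symmetric power of a module, defined as the quotient of the `k`-fold
tensor power by the relations identifying a pure tensor with its permutations. -/
abbrev SymPow (R : Type*) [CommRing R] (k : ℕ) (M : Type*) [AddCommGroup M] [Module R M] :=
  (⨂[R]^k M) ⧸ Submodule.span R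
    {x : ⨂[R]^k M | ∃ (v : Fin k → M) (σ : Equiv.Perm (Fin k)),
      x = (⨂ₜ[R] i, v i) - ⨂ₜ[R] i, v (σ i)}

/-- The submodule `Sym_n M` of symmetric tensors in the `n`-fold tensor power of `M`:
tensors invariant under the permutation action of the symmetric group. -/
def symTensors (R : Type*) [CommRing R] (n : ℕ) (M : Type*) [AddCommGroup M] [Module R M] :
    Submodule R (⨂[R]^n M) where
  carrier := {x | ∀ σ : Equiv.Perm (Fin n),
    PiTensorProduct.reindex R (fun _ : Fin n => M) σ x = x}
  add_mem' := fun hx hy σ => by rw [map_add, hx σ, hy σ]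
  zero_mem' := fun σ => by simp
  smul_mem' := fun r x hx σ => by rw [map_smul, hx σ]

namespace SymDualProof

open PiTensorProduct

variable (R : Type*) [CommRing R] (n : ℕ)
variable (M : Type*) [AddCommGroup M] [Module R M]

lemma mem_symTensors {x : ⨂[R]^n M} :
    x ∈ symTensors R n M ↔ ∀ σ : Equiv.Perm (Fin n),
      PiTensorProduct.reindex R (fun _ : Fin n => M) σ x = x := Iff.rfl

abbrev symRel : Submodule R (⨂[R]^n M) :=
  Submodule.span R {x : ⨂[R]^n M | ∃ (v : Fin n → M) (σ : Equiv.Perm (Fin n)),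
      x = (⨂ₜ[R] i, v i) - ⨂ₜ[R] i, v (σ i)}

noncomputable def pairing :
    (⨂[R]^n (Dual R M)) →ₗ[R] Dual R (⨂[R]^n M) :=
  (LinearMap.llcomp R (⨂[R]^n M) (⨂[R]^n R) R
      (PiTensorProduct.constantBaseRingEquiv (Fin n) R).toLinearMap).comp
    PiTensorProduct.piTensorHomMap

@[simp] lemma pairing_tprod_tprod (φ : Fin n → Dual R M) (v : Fin n → M) :
    pairing R n M (⨂ₜ[R] i, φ i) (⨂ₜ[R] i, v i) = ∏ i, φ i (v i) := by
  simp [pairing]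

lemma pairing_tprod_eq_lift (φ : Fin n → Dual R M) :
    pairing R n M (⨂ₜ[R] i, φ i) =
      PiTensorProduct.lift
        ((MultilinearMap.mkPiAlgebra R (Fin n) R).compLinearMap fun i => φ i) := by
  refine PiTensorProduct.ext (MultilinearMap.ext fun v => ?_)
  simp

lemma pairing_comp_perm (φ : Fin n → Dual R M) (σ : Equiv.Perm (Fin n)) :
    pairing R n M (⨂ₜ[R] i, φ (σ i)) =
      (pairing R n M (⨂ₜ[R] i, φ i)).comp
        (PiTensorProduct.reindex R (fun _ : Fin n => M) σ).toLinearMap := by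
  refine PiTensorProduct.ext (MultilinearMap.ext fun v => ?_)
  simp only [LinearMap.compMultilinearMap_apply, LinearMap.coe_comp, LinearEquiv.coe_coe,
    Function.comp_apply, reindex_tprod, pairing_tprod_tprod]
  rw [← Equiv.prod_comp σ (fun i => φ i (v (σ.symm i)))]
  simp

noncomputable def alphaMap : SymPow R n (Dual R M) →ₗ[R] Dual R (symTensors R n M) :=
  Submodule.liftQ _ (((symTensors R n M).subtype.dualMap).comp (pairing R n M)) (by
    rw [Submodule.span_le]
    rintro _ ⟨φ, σ, rfl⟩
    simp only [SetLike.mem_coe, LinearMap.mem_ker, map_sub]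
    rw [sub_eq_zero]
    ext x
    simp only [LinearMap.coe_comp, Function.comp_apply, LinearMap.dualMap_apply,
      Submodule.coe_subtype]
    rw [pairing_comp_perm]
    simp only [LinearMap.coe_comp, LinearEquiv.coe_coe, Function.comp_apply]
    rw [x.2 σ])

@[simp] lemma alphaMap_mk (t : ⨂[R]^n (Dual R M)) (x : symTensors R n M) :
    alphaMap R n M (Submodule.Quotient.mk t) x = pairing R n M t x.1 := rfl

/-- helper: two linear maps out of `SymPow` agreeing on pure tensors are equal -/
lemma sympow_hom_ext {P : Type*} [AddCommGroup P] [Module R P]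
    {g₁ g₂ : SymPow R n M →ₗ[R] P}
    (h : ∀ v : Fin n → M, g₁ (Submodule.Quotient.mk (⨂ₜ[R] i, v i)) =
      g₂ (Submodule.Quotient.mk (⨂ₜ[R] i, v i))) : g₁ = g₂ := by
  refine LinearMap.ext fun y => ?_
  obtain ⟨t, rfl⟩ := Submodule.Quotient.mk_surjective _ y
  induction t using PiTensorProduct.induction_on with
  | smul_tprod r v =>
      rw [show (Submodule.Quotient.mk (r • (PiTensorProduct.tprod R) v) : SymPow R n M) =
        r • Submodule.Quotient.mk (PiTensorProduct.tprod R v) from rfl, map_smul, map_smul, h]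
  | add x y hx hy =>
      rw [show (Submodule.Quotient.mk (x + y) : SymPow R n M) =
        Submodule.Quotient.mk x + Submodule.Quotient.mk y from rfl, map_add, map_add, hx, hy]

lemma mk_tprod_comp_perm (v : Fin n → M) (σ : Equiv.Perm (Fin n)) :
    (Submodule.Quotient.mk (⨂ₜ[R] i, v (σ i)) : SymPow R n M) =
      Submodule.Quotient.mk (⨂ₜ[R] i, v i) := by
  rw [Submodule.Quotient.eq]
  exact neg_mem_iff.mp (by
    rw [neg_sub]
    exact Submodule.subset_span ⟨v, σ, rfl⟩)


section Maps

variable {M} {N : Type*} [AddCommGroup N] [Module R N]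

noncomputable def symMap (f : M →ₗ[R] N) : symTensors R n M →ₗ[R] symTensors R n N :=
  (PiTensorProduct.map fun _ : Fin n => f).restrict (fun x hx => by
    rw [mem_symTensors] at hx ⊢
    intro σ
    rw [← PiTensorProduct.map_reindex (fun _ : Fin n => f) σ x, hx σ])

@[simp] lemma symMap_coe (f : M →ₗ[R] N) (x : symTensors R n M) :
    (symMap R n f x : ⨂[R]^n N) = PiTensorProduct.map (fun _ : Fin n => f) x.1 := rfl

noncomputable def sympowDualMap (f : M →ₗ[R] N) :
    SymPow R n (Dual R N) →ₗ[R] SymPow R n (Dual R M) :=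
  Submodule.mapQ _ _ (PiTensorProduct.map fun _ : Fin n => f.dualMap) (by
    rw [← Submodule.map_le_iff_le_comap, Submodule.map_span, Submodule.span_le]
    rintro _ ⟨_, ⟨φ, σ, rfl⟩, rfl⟩
    simp only [map_sub, PiTensorProduct.map_tprod]
    exact Submodule.subset_span ⟨fun i => f.dualMap (φ i), σ, rfl⟩)

@[simp] lemma sympowDualMap_mk_tprod (f : M →ₗ[R] N) (φ : Fin n → Dual R N) :
    sympowDualMap R n f (Submodule.Quotient.mk (⨂ₜ[R] i, φ i)) =
      Submodule.Quotient.mk (⨂ₜ[R] i, f.dualMap (φ i)) := by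
  rw [sympowDualMap, Submodule.mapQ_apply, PiTensorProduct.map_tprod]

lemma pairing_dualMap (f : M →ₗ[R] N) (φ : Fin n → Dual R N) :
    pairing R n M (⨂ₜ[R] i, f.dualMap (φ i)) =
      (pairing R n N (⨂ₜ[R] i, φ i)).comp (PiTensorProduct.map fun _ : Fin n => f) := by
  refine PiTensorProduct.ext (MultilinearMap.ext fun v => ?_)
  simp

lemma alpha_natural (f : M →ₗ[R] N) :
    ((symMap R n f).dualMap).comp (alphaMap R n N) =
      (alphaMap R n M).comp (sympowDualMap R n f) := by
  refine sympow_hom_ext R n _ fun φ => ?_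
  ext x
  simp only [LinearMap.coe_comp, Function.comp_apply, LinearMap.dualMap_apply,
    sympowDualMap_mk_tprod, alphaMap_mk, symMap_coe]
  rw [pairing_dualMap]
  rfl

end Maps


section Free

variable (m : ℕ)

/-- `j`-th standard basis vector of `Fin m → R`. -/
def eb (j : Fin m) : Fin m → R := fun k => if j = k then 1 else 0

/-- `j`-th coordinate functional on `Fin m → R`. -/
def db (j : Fin m) : Dual R (Fin m → R) := LinearMap.proj j

lemma db_eb (j k : Fin m) : db R m j (eb R m k) = if k = j then 1 else 0 := rfl

lemma dual_expand (ψ : Dual R (Fin m → R)) : ψ = ∑ j, ψ (eb R m j) • db R m j := by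
  refine LinearMap.ext fun w => ?_
  conv_lhs => rw [pi_eq_sum_univ w, map_sum]
  simp only [LinearMap.sum_apply, LinearMap.smul_apply, map_smul]
  exact Finset.sum_congr rfl fun j _ => by
    rw [smul_eq_mul, smul_eq_mul, mul_comm]; rfl

/-- basis tensors of the tensor power. -/
noncomputable def bT (f : Fin n → Fin m) : ⨂[R]^n (Fin m → R) := ⨂ₜ[R] i, eb R m (f i)

/-- coordinate functionals on the tensor power. -/
noncomputable def Dco (μ : Fin n → Fin m) : Dual R (⨂[R]^n (Fin m → R)) :=
  pairing R n (Fin m → R) (⨂ₜ[R] i, db R m (μ i))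

lemma Dco_bT (μ f : Fin n → Fin m) :
    Dco R n m μ (bT R n m f) = if f = μ then 1 else 0 := by
  rw [Dco, bT, pairing_tprod_tprod]
  by_cases h : f = μ
  · subst h; simp [db_eb]
  · rw [if_neg h]
    obtain ⟨i, hi⟩ := Function.ne_iff.mp h
    exact Finset.prod_eq_zero (Finset.mem_univ i) (by rw [db_eb, if_neg hi])

lemma tprod_expand (v : Fin n → (Fin m → R)) :
    (⨂ₜ[R] i, v i) = ∑ f : Fin n → Fin m, (∏ i, v i (f i)) • bT R n m f := by
  have hv : (fun i => v i) = fun i => ∑ j, v i j • eb R m j := by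
    funext i; exact pi_eq_sum_univ (v i)
  rw [hv, MultilinearMap.map_sum]
  refine Finset.sum_congr rfl fun f _ => ?_
  rw [MultilinearMap.map_smul_univ]
  rfl

lemma expand (x : ⨂[R]^n (Fin m → R)) :
    x = ∑ f : Fin n → Fin m, Dco R n m f x • bT R n m f := by
  have hD : ∀ (v : Fin n → (Fin m → R)) (f : Fin n → Fin m),
      Dco R n m f (⨂ₜ[R] i, v i) = ∏ i, v i (f i) := fun v f => by
    rw [Dco, pairing_tprod_tprod]; rfl
  have : (LinearMap.id : ⨂[R]^n (Fin m → R) →ₗ[R] ⨂[R]^n (Fin m → R)) =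
      ∑ f : Fin n → Fin m, (Dco R n m f).smulRight (bT R n m f) := by
    refine PiTensorProduct.ext (MultilinearMap.ext fun v => ?_)
    simp only [LinearMap.compMultilinearMap_apply, LinearMap.id_apply, LinearMap.sum_apply,
      LinearMap.smulRight_apply]
    simp only [hD]
    exact tprod_expand R n m v
  conv_lhs => rw [← LinearMap.id_apply (R := R) x]
  rw [this]
  simp only [LinearMap.sum_apply, LinearMap.smulRight_apply]

/-- canonical (sorted) representative of the orbit of `f`. -/
def canon (f : Fin n → Fin m) : Fin n → Fin m := f ∘ Tuple.sort f

lemma canon_comp (f : Fin n → Fin m) (σ : Equiv.Perm (Fin n)) :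
    canon n m (f ∘ σ) = canon n m f :=
  Tuple.comp_perm_comp_sort_eq_comp_sort

lemma canon_exists (f : Fin n → Fin m) :
    ∃ σ : Equiv.Perm (Fin n), canon n m f = f ∘ σ := ⟨Tuple.sort f, rfl⟩

lemma canon_canon (f : Fin n → Fin m) : canon n m (canon n m f) = canon n m f := by
  obtain ⟨σ, hσ⟩ := canon_exists n m f
  rw [hσ, canon_comp, ← hσ]

noncomputable def reps : Finset (Fin n → Fin m) :=
  Finset.univ.filter (fun f => canon n m f = f)

noncomputable def fiber (μ : Fin n → Fin m) : Finset (Fin n → Fin m) :=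
  Finset.univ.filter (fun f => canon n m f = μ)

noncomputable def T (μ : Fin n → Fin m) : ⨂[R]^n (Fin m → R) :=
  ∑ f ∈ fiber n m μ, bT R n m f

lemma T_mem (μ : Fin n → Fin m) : T R n m μ ∈ symTensors R n (Fin m → R) := by
  rw [mem_symTensors]
  intro σ
  rw [T, map_sum]
  refine Finset.sum_nbij' (fun f => f ∘ ⇑σ.symm) (fun f => f ∘ ⇑σ) ?_ ?_ ?_ ?_ ?_
  · intro f hf
    simp only [fiber, Finset.mem_filter, Finset.mem_univ, true_and] at hf ⊢
    rw [show f ∘ ⇑σ.symm = f ∘ ⇑σ⁻¹ from rfl, canon_comp n m f σ⁻¹, hf]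
  · intro f hf
    simp only [fiber, Finset.mem_filter, Finset.mem_univ, true_and] at hf ⊢
    rw [canon_comp, hf]
  · intro f _; funext i; simp
  · intro f _; funext i; simp
  · intro f _
    rw [bT, reindex_tprod]
    rfl

lemma Dco_perm (μ : Fin n → Fin m) (σ : Equiv.Perm (Fin n)) {x : ⨂[R]^n (Fin m → R)}
    (hx : x ∈ symTensors R n (Fin m → R)) :
    Dco R n m (μ ∘ σ) x = Dco R n m μ x := by
  have h := pairing_comp_perm R n (Fin m → R) (fun i => db R m (μ i)) σ
  rw [Dco, show (⨂ₜ[R] i, db R m ((μ ∘ σ) i)) = ⨂ₜ[R] i, db R m (μ (σ i)) from rfl, h]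
  simp only [LinearMap.coe_comp, LinearEquiv.coe_coe, Function.comp_apply]
  rw [hx σ]
  rfl

lemma Dco_canon {x : ⨂[R]^n (Fin m → R)} (hx : x ∈ symTensors R n (Fin m → R))
    (f : Fin n → Fin m) : Dco R n m (canon n m f) x = Dco R n m f x := by
  obtain ⟨σ, hσ⟩ := canon_exists n m f
  rw [hσ, Dco_perm R n m f σ hx]

lemma decomp {x : ⨂[R]^n (Fin m → R)} (hx : x ∈ symTensors R n (Fin m → R)) :
    x = ∑ μ ∈ reps n m, Dco R n m μ x • T R n m μ := by
  conv_lhs => rw [expand R n m x]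
  rw [← Finset.sum_fiberwise_of_maps_to (g := canon n m)
    (fun f _ => (Finset.mem_filter (p := fun g => canon n m g = g)).mpr
      ⟨Finset.mem_univ _, canon_canon n m f⟩)]
  refine Finset.sum_congr rfl fun μ hμ => ?_
  rw [T, Finset.smul_sum]
  refine Finset.sum_congr rfl fun f hf => ?_
  simp only [fiber, Finset.mem_filter, Finset.mem_univ, true_and] at hf
  rw [← hf, Dco_canon R n m hx f]


noncomputable def G (μ : Fin n → Fin m) : SymPow R n (Dual R (Fin m → R)) :=
  Submodule.Quotient.mk (⨂ₜ[R] i, db R m (μ i))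

lemma G_canon (f : Fin n → Fin m) : G R n m (canon n m f) = G R n m f := by
  obtain ⟨σ, hσ⟩ := canon_exists n m f
  rw [G, G, hσ]
  exact mk_tprod_comp_perm R n _ (fun i => db R m (f i)) σ

lemma G_span (y : SymPow R n (Dual R (Fin m → R))) :
    y ∈ Submodule.span R {z | ∃ μ ∈ reps n m, z = G R n m μ} := by
  obtain ⟨t, rfl⟩ := Submodule.Quotient.mk_surjective _ y
  induction t using PiTensorProduct.induction_on with
  | smul_tprod r φ =>
      rw [show (Submodule.Quotient.mk (r • (PiTensorProduct.tprod R) φ) :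
        SymPow R n (Dual R (Fin m → R))) =
        r • Submodule.Quotient.mk (PiTensorProduct.tprod R φ) from rfl]
      refine Submodule.smul_mem _ r ?_
      have hφ : (fun i => φ i) = fun i => ∑ j, φ i (eb R m j) • db R m j := by
        funext i; exact dual_expand R m (φ i)
      have : (PiTensorProduct.tprod R) φ =
          ∑ f : Fin n → Fin m, (∏ i, φ i (eb R m (f i))) • (⨂ₜ[R] i, db R m (f i)) := by
        conv_lhs => rw [show (PiTensorProduct.tprod R) φ = ⨂ₜ[R] i, φ i from rfl, hφ,
          MultilinearMap.map_sum]
        exact Finset.sum_congr rfl fun f _ => MultilinearMap.map_smul_univ _ _ _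
      rw [this, ← Submodule.mkQ_apply, map_sum]
      refine Submodule.sum_mem _ fun f _ => ?_
      rw [map_smul]
      refine Submodule.smul_mem _ _ ?_
      rw [Submodule.mkQ_apply]
      rw [show (Submodule.Quotient.mk (⨂ₜ[R] i, db R m (f i)) :
        SymPow R n (Dual R (Fin m → R))) = G R n m f from rfl, ← G_canon]
      exact Submodule.subset_span ⟨canon n m f,
        (Finset.mem_filter (p := fun g => canon n m g = g)).mpr
          ⟨Finset.mem_univ _, canon_canon n m f⟩, rfl⟩
  | add x y hx hy =>
      rw [show (Submodule.Quotient.mk (x + y) : SymPow R n (Dual R (Fin m → R))) =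
        Submodule.Quotient.mk x + Submodule.Quotient.mk y from rfl]
      exact Submodule.add_mem _ hx hy

noncomputable def Tsym (μ : Fin n → Fin m) : symTensors R n (Fin m → R) :=
  ⟨T R n m μ, T_mem R n m μ⟩

noncomputable def betaMap : Dual R (symTensors R n (Fin m → R)) →ₗ[R]
    SymPow R n (Dual R (Fin m → R)) :=
  ∑ μ ∈ reps n m, (LinearMap.applyₗ (Tsym R n m μ)).smulRight (G R n m μ)

lemma betaMap_apply (ξ : Dual R (symTensors R n (Fin m → R))) :
    betaMap R n m ξ = ∑ μ ∈ reps n m, ξ (Tsym R n m μ) • G R n m μ := by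
  rw [betaMap]
  simp [LinearMap.sum_apply]

lemma alpha_G (μ : Fin n → Fin m) (x : symTensors R n (Fin m → R)) :
    alphaMap R n (Fin m → R) (G R n m μ) x = Dco R n m μ x.1 := rfl

lemma Dco_T (μ ν : Fin n → Fin m) :
    Dco R n m μ (T R n m ν) = if canon n m μ = ν then 1 else 0 := by
  rw [T, map_sum]
  rw [Finset.sum_congr rfl fun f _ => Dco_bT R n m μ f]
  rw [Finset.sum_ite_eq' (fiber n m ν) μ (fun _ => (1 : R))]
  congr 1
  simp only [fiber, Finset.mem_filter, Finset.mem_univ, true_and, eq_iff_iff]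

lemma alpha_beta : (alphaMap R n (Fin m → R)).comp (betaMap R n m) = LinearMap.id := by
  refine LinearMap.ext fun ξ => LinearMap.ext fun x => ?_
  simp only [LinearMap.coe_comp, Function.comp_apply, LinearMap.id_apply]
  rw [betaMap_apply, map_sum]
  simp only [LinearMap.sum_apply, map_smul, LinearMap.smul_apply, alpha_G, smul_eq_mul]
  have hx : x = ∑ μ ∈ reps n m, Dco R n m μ x.1 • Tsym R n m μ := by
    ext
    rw [show ((∑ μ ∈ reps n m, Dco R n m μ x.1 • Tsym R n m μ :
        symTensors R n (Fin m → R)) : ⨂[R]^n (Fin m → R)) =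
      ∑ μ ∈ reps n m, Dco R n m μ x.1 • T R n m μ from by
        simp [Tsym]]
    exact decomp R n m x.2
  conv_rhs => rw [hx, map_sum]
  simp [mul_comm]

lemma beta_alpha : (betaMap R n m).comp (alphaMap R n (Fin m → R)) = LinearMap.id := by
  refine LinearMap.ext fun y => ?_
  simp only [LinearMap.coe_comp, Function.comp_apply, LinearMap.id_apply]
  have hy := G_span R n m y
  induction hy using Submodule.span_induction with
  | mem z hz =>
      obtain ⟨μ, hμ, rfl⟩ := hz
      rw [betaMap_apply]
      have hrep : canon n m μ = μ :=
        ((Finset.mem_filter (p := fun g => canon n m g = g)).mp hμ).2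
      have : ∀ ν ∈ reps n m, alphaMap R n (Fin m → R) (G R n m μ) (Tsym R n m ν) • G R n m ν
          = (if μ = ν then (1:R) else 0) • G R n m ν := by
        intro ν hν
        rw [alpha_G]
        have hν' : canon n m ν = ν :=
          ((Finset.mem_filter (p := fun g => canon n m g = g)).mp hν).2
        rw [show (Tsym R n m ν).1 = T R n m ν from rfl, Dco_T, hrep]
      rw [Finset.sum_congr rfl this]
      simp only [ite_smul, one_smul, zero_smul]
      rw [Finset.sum_ite_eq (reps n m) μ (fun ν => G R n m ν), if_pos hμ]
  | zero => simp
  | add a b _ _ ha hb => rw [map_add, map_add, ha, hb]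
  | smul r a _ ha => rw [map_smul, map_smul, ha]

noncomputable def freeEquiv : SymPow R n (Dual R (Fin m → R)) ≃ₗ[R]
    Dual R (symTensors R n (Fin m → R)) :=
  LinearEquiv.ofLinear (alphaMap R n (Fin m → R)) (betaMap R n m)
    (alpha_beta R n m) (beta_alpha R n m)

end Free

section Assemble

variable {M} {N : Type*} [AddCommGroup N] [Module R N]

lemma sympowDualMap_comp {p : N →ₗ[R] M} {i : M →ₗ[R] N}
    (hpi : p.comp i = LinearMap.id) :
    (sympowDualMap R n i).comp (sympowDualMap R n p) = LinearMap.id := by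
  refine sympow_hom_ext R n _ fun φ => ?_
  simp only [LinearMap.coe_comp, Function.comp_apply, sympowDualMap_mk_tprod,
    LinearMap.id_apply]
  have : (fun k => i.dualMap (p.dualMap (φ k))) = φ := by
    funext k
    refine LinearMap.ext fun w => ?_
    simp only [LinearMap.dualMap_apply]
    rw [show p (i w) = w from DFunLike.congr_fun hpi w]
  rw [this]

lemma symMap_comp {p : N →ₗ[R] M} {i : M →ₗ[R] N}
    (hpi : p.comp i = LinearMap.id) (x : symTensors R n M) :
    symMap R n p (symMap R n i x) = x := by
  refine Subtype.ext ?_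
  rw [symMap_coe, symMap_coe, ← LinearMap.comp_apply, ← PiTensorProduct.map_comp]
  rw [show (fun _ : Fin n => p ∘ₗ i) = fun _ : Fin n => (LinearMap.id : M →ₗ[R] M) from by
    rw [hpi]]
  rw [PiTensorProduct.map_id]
  rfl

end Assemble

end SymDualProof


/-- For a finitely generated projective module `V`, the dual of the module `Sym_n V` of symmetric
tensors is naturally isomorphic to `Sym^n (V*)`, via
`φ₁ ⋯ φ_n ↦ (v₁ ⊗ ⋯ ⊗ v_n ↦ φ₁(v₁) ⋯ φ_n(v_n))`. -/
theorem dual_symTensors_equiv_symPow_dual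
    (R : Type*) [CommRing R] (n : ℕ)
    (V : Type*) [AddCommGroup V] [Module R V] [Module.Projective R V] [Module.Finite R V] :
    ∃ e : SymPow R n (Dual R V) ≃ₗ[R] Dual R (symTensors R n V),
      ∀ (φ : Fin n → Dual R V) (x : symTensors R n V),
        e (Submodule.Quotient.mk (⨂ₜ[R] i, φ i)) x =
          PiTensorProduct.lift
            ((MultilinearMap.mkPiAlgebra R (Fin n) R).compLinearMap fun i => φ i) x.1 := by
  classical
  open SymDualProof in
  obtain ⟨m, p, hp⟩ := Module.Finite.exists_fin' R V
  obtain ⟨i, hpi⟩ := Module.projective_lifting_property p LinearMap.id hp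
  set γ : Dual R (symTensors R n V) →ₗ[R] SymPow R n (Dual R V) :=
    (sympowDualMap R n i).comp
      (((freeEquiv R n m).symm.toLinearMap).comp ((symMap R n p).dualMap)) with hγ
  have hfree : ∀ z, freeEquiv R n m z = alphaMap R n (Fin m → R) z := fun z =>
    LinearEquiv.ofLinear_apply (h₁ := SymDualProof.alpha_beta R n m)
      (h₂ := SymDualProof.beta_alpha R n m) ..
  have h1 : (alphaMap R n V).comp γ = LinearMap.id := by
    refine LinearMap.ext fun ξ => ?_
    simp only [hγ, LinearMap.coe_comp, Function.comp_apply, LinearEquiv.coe_coe,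
      LinearMap.id_apply]
    rw [show alphaMap R n V ((sympowDualMap R n i)
        ((freeEquiv R n m).symm ((symMap R n p).dualMap ξ))) =
      ((symMap R n i).dualMap) (alphaMap R n (Fin m → R)
        ((freeEquiv R n m).symm ((symMap R n p).dualMap ξ))) from
      (DFunLike.congr_fun (alpha_natural R n i) _).symm]
    rw [← hfree, LinearEquiv.apply_symm_apply]
    refine LinearMap.ext fun x => ?_
    simp only [LinearMap.dualMap_apply]
    rw [symMap_comp R n hpi x]
  have h2 : γ.comp (alphaMap R n V) = LinearMap.id := by
    refine LinearMap.ext fun y => ?_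
    simp only [hγ, LinearMap.coe_comp, Function.comp_apply, LinearEquiv.coe_coe,
      LinearMap.id_apply]
    rw [show (symMap R n p).dualMap (alphaMap R n V y) =
      alphaMap R n (Fin m → R) (sympowDualMap R n p y) from
      DFunLike.congr_fun (alpha_natural R n p) y]
    rw [← hfree, LinearEquiv.symm_apply_apply]
    exact DFunLike.congr_fun (sympowDualMap_comp R n hpi) y
  refine ⟨LinearEquiv.ofLinear (alphaMap R n V) γ h1 h2, fun φ x => ?_⟩
  rw [LinearEquiv.ofLinear_apply, alphaMap_mk, pairing_tprod_eq_lift]
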